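/- Let H ∈ (0, 1/2) and for p ∈ ℤ define ρ_H(p) = (1/2)·( |p+1|^{2H} + |p−1|^{2H} − 2|p|^{2H} ). Then the series Σ_{p∈ℤ} ρ_H(p)² converges, and there exists a constant C_H > 0, depending only on H, such that for every integer n ≥ 1: Σ_{|p| > n} ρ_H(p)² ≤ C_H · n^{4H−3}. -/

import Mathlib

open Real Finset

/-- Covariance of unit increments of fractional Brownian motion at lag `p`. -/
noncomputable def rhoH (H : ℝ) (p : ℤ) : ℝ :=
  (1 / 2) * ((|(p : ℝ) + 1|) ^ (2 * H) + (|(p : ℝ) - 1|) ^ (2 * H)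
    - 2 * (|(p : ℝ)|) ^ (2 * H))

/-- Bernoulli's inequality, lower version, for exponents in `[-1, 0]`. -/
lemma bern_neg {r u : ℝ} (hr0 : -1 ≤ r) (hr1 : r ≤ 0) (hu : 0 ≤ u) :
    1 + r * u ≤ (1 + u) ^ r := by
  have h1u : (0:ℝ) < 1 + u := by linarith
  rcases le_or_gt (1 + r * u) 0 with h | h
  · exact h.trans (Real.rpow_pos_of_pos h1u r).le
  · have hb : (1 + u) ^ (-r) ≤ 1 + (-r) * u :=
      rpow_one_add_le_one_add_mul_self (by linarith) (by linarith) (by linarith)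
    have hpos : (0:ℝ) < (1 + u) ^ (-r) := Real.rpow_pos_of_pos h1u _
    have key : (1 + r * u) * (1 + u) ^ (-r) ≤ 1 := by
      calc (1 + r * u) * (1 + u) ^ (-r) ≤ (1 + r * u) * (1 + (-r) * u) :=
            mul_le_mul_of_nonneg_left hb h.le
        _ = 1 - (r * u) ^ 2 := by ring
        _ ≤ 1 := by nlinarith [sq_nonneg (r * u)]
    have hprod : (1 + u) ^ r * (1 + u) ^ (-r) = 1 := by
      rw [← Real.rpow_add h1u]; simp
    have : (1 + r * u) * (1 + u) ^ (-r) ≤ (1 + u) ^ r * (1 + u) ^ (-r) := by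
      rw [hprod]; exact key
    exact le_of_mul_le_mul_right this hpos

/-- Second-difference bound for `x ↦ x ^ a`, `a ∈ (0,1)`. -/
lemma D_le {a : ℝ} (ha0 : 0 < a) (ha1 : a < 1) {x : ℝ} (hx : 2 ≤ x) :
    |(x+1) ^ a + (x-1) ^ a - 2 * x ^ a| ≤ 2 * (x-1) ^ (a-2) := by
  have hx0 : (0:ℝ) < x := by linarith
  have hx1 : (0:ℝ) < x - 1 := by linarith
  have hx2 : (0:ℝ) < x + 1 := by linarith
  have hB := fun {s : ℝ} (hs : -1 ≤ s) =>
    rpow_one_add_le_one_add_mul_self hs ha0.le ha1.le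
  -- A1 : (x+1)^a ≤ x^a + a * x^(a-1)
  have A1 : (x+1) ^ a ≤ x ^ a + a * x ^ (a-1) := by
    have h : x + 1 = x * (1 + 1/x) := by field_simp
    calc (x+1) ^ a = x ^ a * (1 + 1/x) ^ a := by
          rw [h, Real.mul_rpow hx0.le (by positivity)]
      _ ≤ x ^ a * (1 + a * (1/x)) :=
          mul_le_mul_of_nonneg_left
            (hB (by have h0 := (one_div_pos.mpr hx0).le; linarith))
            (Real.rpow_nonneg hx0.le a)
      _ = x ^ a + a * x ^ (a-1) := by
          rw [Real.rpow_sub hx0, Real.rpow_one]; field_simp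
  -- A2 : (x-1)^a ≤ x^a - a * x^(a-1)
  have A2 : (x-1) ^ a ≤ x ^ a - a * x ^ (a-1) := by
    have h : x - 1 = x * (1 + (-1/x)) := by field_simp; ring
    have hs : (-1:ℝ) ≤ -1/x := by
      rw [neg_div]; simp only [neg_le_neg_iff]
      rw [div_le_one hx0]; linarith
    calc (x-1) ^ a = x ^ a * (1 + (-1/x)) ^ a := by
          rw [h, Real.mul_rpow hx0.le (by nlinarith [hs])]
      _ ≤ x ^ a * (1 + a * (-1/x)) :=
          mul_le_mul_of_nonneg_left (hB hs) (Real.rpow_nonneg hx0.le a)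
      _ = x ^ a - a * x ^ (a-1) := by
          rw [Real.rpow_sub hx0, Real.rpow_one]; field_simp; ring
  -- A3 : x^a ≤ (x-1)^a + a * (x-1)^(a-1)
  have A3 : x ^ a ≤ (x-1) ^ a + a * (x-1) ^ (a-1) := by
    have h : x = (x-1) * (1 + 1/(x-1)) := by field_simp; ring
    calc x ^ a = (x-1) ^ a * (1 + 1/(x-1)) ^ a := by
          rw [← Real.mul_rpow hx1.le (by positivity), ← h]
      _ ≤ (x-1) ^ a * (1 + a * (1/(x-1))) :=
          mul_le_mul_of_nonneg_left
            (hB (by have h0 := (one_div_pos.mpr hx1).le; linarith))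
            (Real.rpow_nonneg hx1.le a)
      _ = (x-1) ^ a + a * (x-1) ^ (a-1) := by
          rw [Real.rpow_sub hx1, Real.rpow_one]; field_simp
  -- A4 : x^a ≤ (x+1)^a - a * (x+1)^(a-1)
  have A4 : x ^ a ≤ (x+1) ^ a - a * (x+1) ^ (a-1) := by
    have h : x = (x+1) * (1 + (-1/(x+1))) := by field_simp; ring
    have hs : (-1:ℝ) ≤ -1/(x+1) := by
      rw [neg_div]; simp only [neg_le_neg_iff]
      rw [div_le_one hx2]; linarith
    calc x ^ a = (x+1) ^ a * (1 + (-1/(x+1))) ^ a := by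
          rw [← Real.mul_rpow hx2.le (by nlinarith [hs]), ← h]
      _ ≤ (x+1) ^ a * (1 + a * (-1/(x+1))) :=
          mul_le_mul_of_nonneg_left (hB hs) (Real.rpow_nonneg hx2.le a)
      _ = (x+1) ^ a - a * (x+1) ^ (a-1) := by
          rw [Real.rpow_sub hx2, Real.rpow_one]; field_simp; ring
  -- B : (x-1)^(a-1) - (x+1)^(a-1) ≤ 2*(1-a)*(x-1)^(a-2)
  have B : (x-1) ^ (a-1) - (x+1) ^ (a-1) ≤ 2 * (1-a) * (x-1) ^ (a-2) := by
    have h : x + 1 = (x-1) * (1 + 2/(x-1)) := by field_simp; ring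
    have hu : (0:ℝ) ≤ 2/(x-1) := by positivity
    have hbn : 1 + (a-1) * (2/(x-1)) ≤ (1 + 2/(x-1)) ^ (a-1) :=
      bern_neg (by linarith) (by linarith) hu
    have h2 : (x+1) ^ (a-1) = (x-1) ^ (a-1) * (1 + 2/(x-1)) ^ (a-1) := by
      rw [h, Real.mul_rpow hx1.le (by positivity)]
    have h3 : (x-1) ^ (a-1) * (1 + (a-1) * (2/(x-1))) ≤ (x+1) ^ (a-1) := by
      rw [h2]
      exact mul_le_mul_of_nonneg_left hbn (Real.rpow_nonneg hx1.le _)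
    have h4 : (x-1) ^ (a-1) - (x+1) ^ (a-1)
        ≤ (x-1) ^ (a-1) * ((1-a) * (2/(x-1))) := by nlinarith [h3]
    have h5 : (x-1) ^ (a-1) * ((1-a) * (2/(x-1))) = 2 * (1-a) * (x-1) ^ (a-2) := by
      have : (x-1) ^ (a-2) = (x-1) ^ (a-1) / (x-1) := by
        rw [show a - 2 = (a-1) - 1 by ring, Real.rpow_sub hx1, Real.rpow_one]
      rw [this]; field_simp
    linarith
  have hpow2 : (0:ℝ) < (x-1) ^ (a-2) := Real.rpow_pos_of_pos hx1 _
  have hupper : (x+1) ^ a + (x-1) ^ a - 2 * x ^ a ≤ 0 := by linarith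
  have hlower : -(2 * (x-1) ^ (a-2)) ≤ (x+1) ^ a + (x-1) ^ a - 2 * x ^ a := by
    have ha' : a * (2 * (1-a)) ≤ 2 := by nlinarith
    have := mul_le_mul_of_nonneg_left B ha0.le
    nlinarith [hpow2]
  rw [abs_le]
  constructor
  · exact hlower
  · linarith

lemma rhoH_neg (H : ℝ) (p : ℤ) : rhoH H (-p) = rhoH H p := by
  unfold rhoH
  push_cast
  rw [show -(p:ℝ) + 1 = -((p:ℝ) - 1) by ring, show -(p:ℝ) - 1 = -((p:ℝ) + 1) by ring,
    abs_neg, abs_neg, abs_neg]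
  ring

lemma rhoH_natAbs (H : ℝ) (p : ℤ) : rhoH H (p.natAbs : ℤ) = rhoH H p := by
  rcases Int.natAbs_eq p with h | h
  · rw [← h]
  · rw [show ((p.natAbs : ℤ)) = -p by omega, rhoH_neg]

lemma rho_sq_le (H : ℝ) (hH : H ∈ Set.Ioo (0:ℝ) (1/2)) (m : ℕ) (hm : 2 ≤ m) :
    rhoH H (m : ℤ) ^ 2 ≤ ((m:ℝ) - 1) ^ (4 * H - 4 : ℝ) := by
  obtain ⟨hH0, hH1⟩ := hH
  have ha0 : 0 < 2 * H := by linarith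
  have ha1 : 2 * H < 1 := by linarith
  have hx : (2:ℝ) ≤ (m:ℝ) := by exact_mod_cast hm
  have hx1 : (0:ℝ) < (m:ℝ) - 1 := by linarith
  have hD := D_le ha0 ha1 hx
  have habs : rhoH H (m : ℤ) = (1/2) * (((m:ℝ)+1) ^ (2*H) + ((m:ℝ)-1) ^ (2*H)
      - 2 * ((m:ℝ)) ^ (2*H)) := by
    unfold rhoH
    push_cast
    rw [abs_of_pos (by linarith : (0:ℝ) < (m:ℝ) + 1), abs_of_pos hx1,
      abs_of_pos (by linarith : (0:ℝ) < (m:ℝ))]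
  have h1 : rhoH H (m : ℤ) ^ 2
      = (((m:ℝ)+1) ^ (2*H) + ((m:ℝ)-1) ^ (2*H) - 2 * ((m:ℝ)) ^ (2*H)) ^ 2 / 4 := by
    rw [habs]; ring
  have h2 : (((m:ℝ)+1) ^ (2*H) + ((m:ℝ)-1) ^ (2*H) - 2 * ((m:ℝ)) ^ (2*H)) ^ 2
      ≤ (2 * ((m:ℝ)-1) ^ (2*H-2)) ^ 2 := by
    rw [← sq_abs]
    exact pow_le_pow_left₀ (abs_nonneg _) hD 2
  have h3 : (2 * ((m:ℝ)-1) ^ (2*H-2)) ^ 2 = 4 * ((m:ℝ)-1) ^ (4*H-4 : ℝ) := by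
    have : ((m:ℝ)-1) ^ (2*H-2) * ((m:ℝ)-1) ^ (2*H-2) = ((m:ℝ)-1) ^ (4*H-4 : ℝ) := by
      rw [← Real.rpow_add hx1]; ring_nf
    nlinarith [this]
  rw [h1]
  rw [h3] at h2
  linarith

/-- Key finite-sum tail estimate. -/
lemma key_sum (H : ℝ) (hH : H ∈ Set.Ioo (0:ℝ) (1/2)) (n : ℕ) (hn : 1 ≤ n)
    (s : Finset ℤ) (hs : ∀ p ∈ s, (n : ℤ) < |p|) :
    ∑ p ∈ s, rhoH H p ^ 2 ≤ 4 * (n:ℝ) ^ (4 * H - 3 : ℝ) := by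
  obtain ⟨hH0, hH1⟩ := hH
  have hn0 : (0:ℝ) < (n:ℝ) := by exact_mod_cast hn
  set F : ℕ → ℝ := fun m => rhoH H (m : ℤ) ^ 2 with hF
  have hFnn : ∀ m, 0 ≤ F m := fun m => sq_nonneg _
  -- step 1: fold onto ℕ via natAbs
  have step1 : ∑ p ∈ s, rhoH H p ^ 2 ≤ ∑ b ∈ s.image Int.natAbs, 2 * F b := by
    have e1 : ∑ p ∈ s, rhoH H p ^ 2 = ∑ p ∈ s, F p.natAbs := by
      refine Finset.sum_congr rfl fun p _ => ?_
      rw [hF]; simp only []; rw [rhoH_natAbs]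
    rw [e1, Finset.sum_comp (fun m : ℕ => F m) Int.natAbs]
    refine Finset.sum_le_sum fun b _ => ?_
    have hcard : #{a ∈ s | a.natAbs = b} ≤ 2 := by
      have hsub : {a ∈ s | a.natAbs = b} ⊆ {(b:ℤ), -(b:ℤ)} := by
        intro a ha
        simp only [Finset.mem_filter] at ha
        simp only [Finset.mem_insert, Finset.mem_singleton]
        omega
      calc #{a ∈ s | a.natAbs = b} ≤ #({(b:ℤ), -(b:ℤ)} : Finset ℤ) :=
            Finset.card_le_card hsub
        _ ≤ 2 := Finset.card_insert_le _ _ |>.trans (by simp)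
    rw [nsmul_eq_mul]
    exact mul_le_mul_of_nonneg_right (by exact_mod_cast hcard) (hFnn b)
  -- step 2: bound each term
  have step2 : ∀ b ∈ s.image Int.natAbs,
      F b ≤ (n:ℝ) ^ (4*H-2 : ℝ) * (((b-1 : ℕ):ℝ) ^ 2)⁻¹ := by
    intro b hb
    obtain ⟨p, hp, rfl⟩ := Finset.mem_image.mp hb
    have hbn : n < p.natAbs := by
      have h' := hs p hp; rw [Int.abs_eq_natAbs] at h'; omega
    have hb2 : 2 ≤ p.natAbs := by omega
    have hj : ((p.natAbs - 1 : ℕ) : ℝ) = (p.natAbs : ℝ) - 1 := by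
      push_cast [Nat.cast_sub (by omega : 1 ≤ p.natAbs)]; ring
    have hj1 : (0:ℝ) < (p.natAbs:ℝ) - 1 := by
      have : (2:ℝ) ≤ (p.natAbs:ℝ) := by exact_mod_cast hb2
      linarith
    have hjn : (n:ℝ) ≤ (p.natAbs:ℝ) - 1 := by
      have : (n+1:ℝ) ≤ (p.natAbs:ℝ) := by exact_mod_cast hbn
      linarith
    calc F p.natAbs ≤ ((p.natAbs:ℝ) - 1) ^ (4*H-4 : ℝ) :=
          rho_sq_le H ⟨hH0, hH1⟩ _ hb2
      _ = ((p.natAbs:ℝ) - 1) ^ (4*H-2 : ℝ) * ((p.natAbs:ℝ) - 1) ^ (-2 : ℝ) := by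
          rw [← Real.rpow_add hj1]; ring_nf
      _ ≤ (n:ℝ) ^ (4*H-2 : ℝ) * ((p.natAbs:ℝ) - 1) ^ (-2 : ℝ) := by
          refine mul_le_mul_of_nonneg_right ?_ (Real.rpow_nonneg hj1.le _)
          exact Real.rpow_le_rpow_of_nonpos hn0 hjn (by linarith)
      _ = (n:ℝ) ^ (4*H-2 : ℝ) * ((((p.natAbs-1 : ℕ)):ℝ) ^ 2)⁻¹ := by
          rw [hj]
          congr 1
          rw [show ((-2:ℝ)) = (((-2:ℤ)):ℝ) by norm_num, Real.rpow_intCast,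
            zpow_neg, show ((2:ℤ)) = ((2:ℕ):ℤ) from rfl, zpow_natCast]
  -- step 3: sum of inverse squares
  have step3 : ∑ b ∈ s.image Int.natAbs, (((b-1 : ℕ):ℝ) ^ 2)⁻¹ ≤ 2 / n := by
    have einj : ∀ x ∈ s.image Int.natAbs, ∀ y ∈ s.image Int.natAbs,
        x - 1 = y - 1 → x = y := by
      intro x hx y hy hxy
      obtain ⟨p, hp, rfl⟩ := Finset.mem_image.mp hx
      obtain ⟨q, hq, rfl⟩ := Finset.mem_image.mp hy
      have h1 := hs p hp; have h2 := hs q hq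
      rw [Int.abs_eq_natAbs] at h1 h2
      omega
    rw [← Finset.sum_image (g := fun b => b - 1)
      (f := fun j : ℕ => ((j:ℝ) ^ 2)⁻¹) einj]
    set t := (s.image Int.natAbs).image (fun b => b - 1) with ht
    set M := t.sup id + 1 with hM
    have hsub : t ⊆ Finset.Ioo (n-1) M := by
      intro j hj
      obtain ⟨b, hb, rfl⟩ := Finset.mem_image.mp hj
      obtain ⟨p, hp, rfl⟩ := Finset.mem_image.mp hb
      have h' := hs p hp
      rw [Int.abs_eq_natAbs] at h'
      have hjM : p.natAbs - 1 ≤ t.sup id := Finset.le_sup (f := id) hj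
      simp only [Finset.mem_Ioo]
      omega
    calc ∑ j ∈ t, ((j:ℝ) ^ 2)⁻¹ ≤ ∑ j ∈ Finset.Ioo (n-1) M, ((j:ℝ) ^ 2)⁻¹ :=
          Finset.sum_le_sum_of_subset_of_nonneg hsub (fun _ _ _ => by positivity)
      _ ≤ 2 / ((n-1 : ℕ) + 1) := sum_Ioo_inv_sq_le _ _
      _ = 2 / n := by
          congr 1
          push_cast [Nat.cast_sub hn]
          ring
  -- combine
  have hfin : ∑ p ∈ s, rhoH H p ^ 2
      ≤ 2 * ((n:ℝ) ^ (4*H-2 : ℝ) * (2 / n)) := by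
    calc ∑ p ∈ s, rhoH H p ^ 2 ≤ ∑ b ∈ s.image Int.natAbs, 2 * F b := step1
      _ ≤ ∑ b ∈ s.image Int.natAbs,
            2 * ((n:ℝ) ^ (4*H-2 : ℝ) * (((b-1 : ℕ):ℝ) ^ 2)⁻¹) :=
          Finset.sum_le_sum fun b hb =>
            mul_le_mul_of_nonneg_left (step2 b hb) (by norm_num)
      _ = 2 * ((n:ℝ) ^ (4*H-2 : ℝ)
            * ∑ b ∈ s.image Int.natAbs, (((b-1 : ℕ):ℝ) ^ 2)⁻¹) := by
          rw [Finset.mul_sum, Finset.mul_sum]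
      _ ≤ 2 * ((n:ℝ) ^ (4*H-2 : ℝ) * (2 / n)) := by
          have h := mul_le_mul_of_nonneg_left step3
            (Real.rpow_nonneg hn0.le (4*H-2 : ℝ))
          linarith
  have hpow : (n:ℝ) ^ (4*H-2 : ℝ) * (2 / n) = 2 * (n:ℝ) ^ (4*H-3 : ℝ) := by
    rw [show (4*H-3 : ℝ) = (4*H-2) + (-1) by ring, Real.rpow_add hn0,
      Real.rpow_neg_one]
    field_simp
  rw [hpow] at hfin
  linarith

theorem rhoH_sq_summable_and_tail_bound (H : ℝ) (hH : H ∈ Set.Ioo (0 : ℝ) (1 / 2)) :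
    Summable (fun p : ℤ => rhoH H p ^ 2) ∧
    ∃ C : ℝ, 0 < C ∧ ∀ n : ℕ, 1 ≤ n →
      ∑' p : {p : ℤ // (n : ℤ) < |p|}, rhoH H (p : ℤ) ^ 2
        ≤ C * (n : ℝ) ^ (4 * H - 3 : ℝ) := by
  have hsum : Summable (fun p : ℤ => rhoH H p ^ 2) := by
    apply summable_of_sum_le (c := rhoH H (-1) ^ 2 + rhoH H 0 ^ 2 + rhoH H 1 ^ 2 + 4)
      (fun p => sq_nonneg _)
    intro u
    rw [← Finset.sum_filter_add_sum_filter_not u (fun p => |p| ≤ 1)]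
    have h1 : ∑ p ∈ u.filter (fun p => |p| ≤ 1), rhoH H p ^ 2
        ≤ rhoH H (-1) ^ 2 + rhoH H 0 ^ 2 + rhoH H 1 ^ 2 := by
      have hsub : u.filter (fun p => |p| ≤ 1) ⊆ ({-1, 0, 1} : Finset ℤ) := by
        intro p hp
        simp only [Finset.mem_filter] at hp
        simp only [Finset.mem_insert, Finset.mem_singleton]
        have h0 := abs_le.mp hp.2
        omega
      calc ∑ p ∈ u.filter (fun p => |p| ≤ 1), rhoH H p ^ 2
          ≤ ∑ p ∈ ({-1, 0, 1} : Finset ℤ), rhoH H p ^ 2 :=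
            Finset.sum_le_sum_of_subset_of_nonneg hsub (fun _ _ _ => sq_nonneg _)
        _ = rhoH H (-1) ^ 2 + rhoH H 0 ^ 2 + rhoH H 1 ^ 2 := by
            rw [show ({-1, 0, 1} : Finset ℤ) = insert (-1) (insert 0 {1}) from rfl]
            rw [Finset.sum_insert (by decide), Finset.sum_insert (by decide),
              Finset.sum_singleton]
            ring
    have h2 : ∑ p ∈ u.filter (fun p => ¬ |p| ≤ 1), rhoH H p ^ 2 ≤ 4 := by
      have := key_sum H hH 1 le_rfl (u.filter (fun p => ¬ |p| ≤ 1))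
        (fun p hp => by
          simp only [Finset.mem_filter, not_le] at hp
          simpa using hp.2)
      simpa using this
    linarith
  refine ⟨hsum, 4, by norm_num, fun n hn => ?_⟩
  have hsub : Summable (fun x : {p : ℤ // (n:ℤ) < |p|} => rhoH H (x : ℤ) ^ 2) :=
    hsum.subtype _
  apply Summable.tsum_le_of_sum_le hsub
  intro u
  have key := key_sum H hH n hn (u.image Subtype.val)
    (fun p hp => by
      obtain ⟨x, _, rfl⟩ := Finset.mem_image.mp hp
      exact x.2)
  rwa [Finset.sum_image (fun x _ y _ h => Subtype.ext h)] at key
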